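/- arXiv:1312.4397 — 2 statements merged into one kernel-verified Lean document; each statement's English description precedes it below -/
import Mathlib

section
/- For integers n ≥ 3 define s_n = (∑_{k=1}^{n−2} 1/k) + 13/(12(n−1)) + 5/(12n) − ln n. Then lim_{n→∞} n⁵·(s_n − s_{n+1} − 1/(4n⁴)) = −2/15. -/
open Filter Topology

noncomputable def s (n : ℕ) : ℝ :=
  (∑ k ∈ Finset.Icc 1 (n - 2), (1 : ℝ) / k) + 13 / (12 * ((n : ℝ) - 1)) + 5 / (12 * n)
    - Real.log n

lemma s_diff {n : ℕ} (hn : 3 ≤ n) :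
    s n - s (n + 1) = 1 / (12 * ((n : ℝ) - 1)) - 2 / (3 * n) - 5 / (12 * ((n : ℝ) + 1))
      + Real.log (1 + 1 / n) := by
  have hn3 : (3:ℝ) ≤ (n:ℝ) := by exact_mod_cast hn
  have hsum : (∑ k ∈ Finset.Icc 1 ((n+1) - 2), (1 : ℝ) / k)
      = (∑ k ∈ Finset.Icc 1 (n - 2), (1 : ℝ) / k) + 1 / ((n:ℝ) - 1) := by
    have h2 : (n + 1) - 2 = (n - 2) + 1 := by omega
    rw [h2, Finset.sum_Icc_succ_top (by omega : 1 ≤ (n - 2) + 1)]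
    congr 2
    have h3 : (n - 2 + 1 : ℕ) = n - 1 := by omega
    rw [h3, Nat.cast_sub (by omega : 1 ≤ n), Nat.cast_one]
  have hlog : Real.log (1 + 1 / (n:ℝ)) = Real.log ((n:ℝ) + 1) - Real.log n := by
    rw [show (1 : ℝ) + 1 / n = ((n:ℝ) + 1) / n by field_simp]
    rw [Real.log_div (by linarith) (by linarith)]
  simp only [s, hsum]
  push_cast
  rw [hlog]
  have h1 : (n:ℝ) ≠ 0 := by intro h; rw [h] at hn3; norm_num at hn3
  have h2 : (n:ℝ) - 1 ≠ 0 := by intro h; nlinarith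
  have h3 : (n:ℝ) + 1 ≠ 0 := by intro h; nlinarith
  have h4 : ((n:ℝ) + 1) - 1 = (n:ℝ) := by ring
  rw [h4]
  field_simp
  ring

theorem diff_rate_five :
    Tendsto (fun n : ℕ => (n : ℝ) ^ 5 * (s n - s (n + 1) - 1 / (4 * (n : ℝ) ^ 4))) atTop
      (𝓝 (-(2 / 15))) := by
  set A : ℕ → ℝ := fun n => ((-8) + 20 * (1/(n:ℝ)) - 12 * (1/(n:ℝ))^2 + 10 * (1/(n:ℝ))^3)
      / (60 - 60 * (1/(n:ℝ))^2) with hA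
  set B : ℕ → ℝ := fun n => (n:ℝ)^5 *
      ((∑ i ∈ Finset.range 6, (-(1/(n:ℝ)))^(i+1)/(i+1)) + Real.log (1 + 1/(n:ℝ))) with hB
  have h0 : Tendsto (fun n : ℕ => 1/(n:ℝ)) atTop (𝓝 0) := tendsto_one_div_atTop_nhds_zero_nat
  have hAt : Tendsto A atTop (𝓝 (-(2/15))) := by
    have hg : ContinuousAt (fun x : ℝ => ((-8) + 20 * x - 12 * x^2 + 10 * x^3)
        / (60 - 60 * x^2)) 0 := by
      apply ContinuousAt.div
      · fun_prop
      · fun_prop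
      · norm_num
    have h := hg.tendsto.comp h0
    simp only [Function.comp_def] at h
    convert h using 2
    norm_num
  have hBt : Tendsto B atTop (𝓝 0) := by
    apply squeeze_zero_norm' (a := fun n : ℕ => 2 / (n:ℝ)^2)
    · filter_upwards [eventually_ge_atTop 3] with n hn
      have hn3 : (3:ℝ) ≤ (n:ℝ) := by exact_mod_cast hn
      have hnpos : (0:ℝ) < n := by linarith
      have hx : |(-(1/(n:ℝ)))| < 1 := by
        rw [abs_neg, abs_of_pos (by positivity)]
        rw [div_lt_one hnpos]; linarith
      have key := Real.abs_log_sub_add_sum_range_le hx 6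
      rw [show (1:ℝ) - (-(1/(n:ℝ))) = 1 + 1/(n:ℝ) by ring] at key
      rw [abs_neg, abs_of_pos (by positivity : (0:ℝ) < 1/(n:ℝ))] at key
      have hBabs : ‖B n‖ = (n:ℝ)^5 *
          |(∑ i ∈ Finset.range 6, (-(1/(n:ℝ)))^(i+1)/(i+1)) + Real.log (1 + 1/(n:ℝ))| := by
        rw [hB, Real.norm_eq_abs, abs_mul, abs_of_pos (by positivity : (0:ℝ) < (n:ℝ)^5)]
      rw [hBabs]
      have hhalf : (1:ℝ)/2 ≤ 1 - 1/(n:ℝ) := by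
        have : 1/(n:ℝ) ≤ 1/3 := by
          apply div_le_div_of_nonneg_left (by norm_num) (by norm_num) hn3
        linarith
      calc (n:ℝ)^5 * |(∑ i ∈ Finset.range 6, (-(1/(n:ℝ)))^(i+1)/(i+1))
              + Real.log (1 + 1/(n:ℝ))|
          ≤ (n:ℝ)^5 * ((1/(n:ℝ))^(6+1) / (1 - 1/(n:ℝ))) := by
            exact mul_le_mul_of_nonneg_left key (by positivity)
        _ ≤ (n:ℝ)^5 * ((1/(n:ℝ))^(6+1) / (1/2)) := by
            apply mul_le_mul_of_nonneg_left _ (by positivity)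
            apply div_le_div_of_nonneg_left (by positivity) (by norm_num) hhalf
        _ = 2 / (n:ℝ)^2 := by
            rw [one_div_pow]
            field_simp
    · have h := (h0.mul h0).const_mul (2:ℝ)
      norm_num at h
      exact h.congr fun n => by rw [pow_two]; ring
  have heq : ∀ᶠ n : ℕ in atTop,
      (n:ℝ)^5 * (s n - s (n+1) - 1/(4*(n:ℝ)^4)) = A n + B n := by
    filter_upwards [eventually_ge_atTop 3] with n hn
    have hn3 : (3:ℝ) ≤ (n:ℝ) := by exact_mod_cast hn
    have h1 : (n:ℝ) ≠ 0 := by intro h; rw [h] at hn3; norm_num at hn3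
    have h2 : (n:ℝ) - 1 ≠ 0 := by intro h; nlinarith
    have h3 : (n:ℝ) + 1 ≠ 0 := by intro h; nlinarith
    have h9 : (9:ℝ) ≤ (n:ℝ)^2 := by nlinarith
    have h9' := mul_le_mul_of_nonneg_left h9 (by linarith : (0:ℝ) ≤ (n:ℝ))
    have hd2 : 60*(n:ℝ)^3 - 60*(n:ℝ) ≠ 0 := by intro h; nlinarith
    have h8 : (1:ℝ)/(n:ℝ) ≤ 1/3 := by
      rw [div_le_div_iff₀ (by linarith) (by norm_num)]; linarith
    have h8' : (0:ℝ) ≤ 1/(n:ℝ) := by positivity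
    have h5 : (60:ℝ) - 60*(1/(n:ℝ))^2 ≠ 0 := by nlinarith
    have hAn : A n = ((-8)*(n:ℝ)^3 + 20*(n:ℝ)^2 - 12*(n:ℝ) + 10)
        / (60*(n:ℝ)^3 - 60*(n:ℝ)) := by
      rw [hA]
      rw [div_eq_div_iff h5 hd2]
      field_simp
    rw [s_diff hn, hAn]
    simp only [hB, Finset.sum_range_succ, Finset.sum_range_zero]
    set L := Real.log (1 + 1/(n:ℝ)) with hL
    push_cast
    have h6 : (n:ℝ)^2 - 1 ≠ 0 := by nlinarith
    field_simp
    ring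
  rw [show (-(2/15) : ℝ) = -(2/15) + 0 by ring]
  exact Tendsto.congr' (heq.mono fun n h => h.symm) (hAt.add hBt)
end

section
/- For every integer n ≥ 3, the quantity s_n = (∑_{k=1}^{n−2} 1/k) + 13/(12(n−1)) + 5/(12n) − ln n satisfies s_n > γ. -/
open Finset Real Filter Topology

lemma s_eq (m : ℕ) : s (m + 3) = (∑ k ∈ Finset.Icc 1 (m + 1), (1 : ℝ) / k)
    + 13 / (12 * ((m : ℝ) + 2)) + 5 / (12 * ((m : ℝ) + 3)) - Real.log ((m : ℝ) + 3) := by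
  have h : m + 3 - 2 = m + 1 := by omega
  simp only [s, h]
  have h2 : ((m : ℝ) + 3) - 1 = (m : ℝ) + 2 := by ring
  push_cast
  rw [h2]

lemma s_eq' (m : ℕ) : s (m + 4) = (∑ k ∈ Finset.Icc 1 (m + 1), (1 : ℝ) / k) + 1/((m:ℝ)+2)
    + 13 / (12 * ((m : ℝ) + 3)) + 5 / (12 * ((m : ℝ) + 4)) - Real.log ((m : ℝ) + 4) := by
  have h : m + 4 - 2 = m + 2 := by omega
  simp only [s, h]
  rw [show m + 2 = (m + 1) + 1 from rfl, Finset.sum_Icc_succ_top (by omega)]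
  have h2 : ((m : ℝ) + 4) - 1 = (m : ℝ) + 3 := by ring
  have h3 : ((m:ℝ) + 1 + 1) = (m:ℝ) + 2 := by ring
  push_cast
  rw [h2, h3]

lemma log_lb (N : ℝ) (hN : 3 ≤ N) :
    1/N - 1/(2*N^2) + 1/(3*N^3) - 1/(4*N^4) + 1/(5*N^5) - 1/(N^5*(N-1))
      ≤ Real.log (1 + 1/N) := by
  have hN0 : (0:ℝ) < N := by linarith
  have hN1 : (0:ℝ) < N - 1 := by linarith
  have hfrac : (0:ℝ) < 1 - 1/N := by
    rw [sub_pos, div_lt_one hN0]; linarith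
  have hx : |(-(1/N))| < 1 := by
    rw [abs_neg, abs_of_pos (by positivity), div_lt_one hN0]; linarith
  have h := Real.abs_log_sub_add_sum_range_le hx 5
  rw [abs_le] at h
  have h1 := h.1
  have hS : (∑ i ∈ Finset.range 5, (-(1/N)) ^ (i + 1) / (i + 1))
      = -(1/N) + 1/(2*N^2) - 1/(3*N^3) + 1/(4*N^4) - 1/(5*N^5) := by
    simp [Finset.sum_range_succ]
    ring
  have habs : |(-(1/N))| = 1/N := by rw [abs_neg, abs_of_pos (by positivity)]
  rw [hS, habs] at h1
  have hE : (1/N) ^ (5 + 1) / (1 - 1/N) = 1/(N^5*(N-1)) := by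
    rw [div_eq_div_iff hfrac.ne' (by positivity)]
    field_simp
    ring_nf; rw [← mul_pow, mul_inv_cancel₀ hN0.ne', one_pow]
  rw [hE] at h1
  have hlog : (1 : ℝ) - -(1/N) = 1 + 1/N := by ring
  rw [hlog] at h1
  linarith

lemma s_step (m : ℕ) : s (m + 4) < s (m + 3) := by
  rw [s_eq', s_eq]
  set x : ℝ := (m : ℝ) with hx
  have hx0 : (0:ℝ) ≤ x := by positivity
  have h2 : (0:ℝ) < x + 2 := by linarith
  have h3 : (0:ℝ) < x + 3 := by linarith
  have h4 : (0:ℝ) < x + 4 := by linarith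
  have hlb := log_lb (x + 3) (by linarith)
  have hkey : -(1/(12*(x+2))) + 2/(3*(x+3)) + 5/(12*(x+4))
      < 1/(x+3) - 1/(2*(x+3)^2) + 1/(3*(x+3)^3) - 1/(4*(x+3)^4) + 1/(5*(x+3)^5)
        - 1/((x+3)^5*((x+3)-1)) := by
    rw [← sub_pos]
    have hpoly : (0:ℝ) < 15*(x+3)^3 - 8*(x+3)^2 - 45*(x+3) - 72 := by nlinarith
    have hexp : 1/(x+3) - 1/(2*(x+3)^2) + 1/(3*(x+3)^3) - 1/(4*(x+3)^4) + 1/(5*(x+3)^5)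
        - 1/((x+3)^5*((x+3)-1))
        - (-(1/(12*(x+2))) + 2/(3*(x+3)) + 5/(12*(x+4)))
        = (15*(x+3)^3 - 8*(x+3)^2 - 45*(x+3) - 72) / (60 * (x+3)^5 * (x+2) * (x+4)) := by
      have e : (x+3) - 1 = x + 2 := by ring
      rw [e]
      field_simp
      ring
    rw [hexp]
    positivity
  have hfinal : -(1/(12*(x+2))) + 2/(3*(x+3)) + 5/(12*(x+4)) < Real.log (1 + 1/(x+3)) := by
    rw [show (x+3) - 1 = x + 2 by ring] at hlb hkey
    exact lt_of_lt_of_le hkey hlb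
  have hlog4 : Real.log (x + 4) = Real.log (x + 3) + Real.log (1 + 1/(x+3)) := by
    rw [← Real.log_mul (by positivity) (by positivity)]
    congr 1
    field_simp
    ring
  have e1 : 1/(x+2) + 13/(12*(x+3)) + 5/(12*(x+4)) - (13/(12*(x+2)) + 5/(12*(x+3)))
      = -(1/(12*(x+2))) + 2/(3*(x+3)) + 5/(12*(x+4)) := by
    field_simp
    ring
  rw [hlog4]
  linarith

lemma harmonic_eq (n : ℕ) : ((harmonic n : ℚ) : ℝ) = ∑ k ∈ Finset.Icc 1 n, (1:ℝ)/k := by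
  induction n with
  | zero => simp
  | succ j ih =>
    rw [Finset.sum_Icc_succ_top (by omega : 1 ≤ j + 1), ← ih, harmonic_succ]
    push_cast
    ring

lemma s_le_of_le (m k : ℕ) : s (m + 3 + k) ≤ s (m + 3) := by
  induction k with
  | zero => simp
  | succ j ih =>
    have h1 : m + 3 + (j + 1) = (m + j) + 4 := by omega
    rw [h1]
    have h2 : m + 3 + j = (m + j) + 3 := by omega
    rw [h2] at ih
    exact le_trans (s_step (m + j)).le ih

lemma tendsto_s : Tendsto (fun m : ℕ => s (m + 3)) atTop (𝓝 Real.eulerMascheroniConstant) := by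
  have h1 : Tendsto (fun m : ℕ => (harmonic (m + 3) : ℝ) - Real.log ((m:ℝ) + 3)) atTop
      (𝓝 Real.eulerMascheroniConstant) := by
    have := Real.tendsto_harmonic_sub_log.comp (tendsto_add_atTop_nat 3)
    exact this.congr (fun m => by push_cast [Function.comp]; norm_num)
  have h2 : Tendsto (fun m : ℕ => 1/(12*((m:ℝ)+2)) - 7/(12*((m:ℝ)+3))) atTop (𝓝 0) := by
    have ha : Tendsto (fun m : ℕ => 12*((m:ℝ)+2)) atTop atTop := by
      apply Tendsto.const_mul_atTop (by norm_num : (0:ℝ) < 12)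
      exact tendsto_atTop_add_const_right _ 2 tendsto_natCast_atTop_atTop
    have hb : Tendsto (fun m : ℕ => 12*((m:ℝ)+3)) atTop atTop := by
      apply Tendsto.const_mul_atTop (by norm_num : (0:ℝ) < 12)
      exact tendsto_atTop_add_const_right _ 3 tendsto_natCast_atTop_atTop
    have ha' : Tendsto (fun m : ℕ => 1/(12*((m:ℝ)+2))) atTop (𝓝 0) :=
      tendsto_const_nhds.div_atTop ha
    have hb' : Tendsto (fun m : ℕ => 7/(12*((m:ℝ)+3))) atTop (𝓝 0) :=
      tendsto_const_nhds.div_atTop hb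
    simpa using ha'.sub hb'
  have h3 := h1.add h2
  rw [add_zero] at h3
  apply h3.congr
  intro m
  rw [s_eq]
  have hharm : ((harmonic (m + 3) : ℚ) : ℝ) = (∑ k ∈ Finset.Icc 1 (m + 1), (1:ℝ)/k)
      + 1/((m:ℝ)+2) + 1/((m:ℝ)+3) := by
    rw [harmonic_eq]
    rw [show m + 3 = (m + 2) + 1 from rfl, Finset.sum_Icc_succ_top (by omega),
      show m + 2 = (m + 1) + 1 from rfl, Finset.sum_Icc_succ_top (by omega)]
    push_cast
    ring
  rw [hharm]
  field_simp
  ring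

theorem s_gt_gamma (n : ℕ) (hn : 3 ≤ n) : Real.eulerMascheroniConstant < s n := by
  obtain ⟨m, rfl⟩ : ∃ m, n = m + 3 := ⟨n - 3, by omega⟩
  have hle : Real.eulerMascheroniConstant ≤ s (m + 4) := by
    have ht : Tendsto (fun k : ℕ => s (m + 4 + k)) atTop (𝓝 Real.eulerMascheroniConstant) := by
      have := tendsto_s.comp (tendsto_add_atTop_nat (m + 1))
      refine this.congr fun k => ?_
      show s (k + (m + 1) + 3) = s (m + 4 + k)
      exact congrArg s (by omega)
    refine le_of_tendsto ht (Eventually.of_forall fun k => ?_)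
    have h := s_le_of_le (m + 1) k
    have h1 : m + 1 + 3 + k = m + 4 + k := by omega
    have h2 : m + 1 + 3 = m + 4 := by omega
    rw [h1, h2] at h
    exact h
  exact lt_of_le_of_lt hle (s_step m)
end
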